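/- Let n ≥ 1 and let f : ℝⁿ → [0,∞) be a measurable function with ∫_{ℝⁿ} f(x) dx = 1 such that x ↦ f(x) log f(x) is integrable. Fix ω ∈ ℝⁿ and set θ² := ∫_{ℝⁿ} |x − ω|² f(x) dx, assumed finite. Then for every t > 0, exp( −(1/n) ∫_{ℝⁿ} f log f dx ) ≤ √(πe/t) · ( t + θ²/(2n) ). -/

import Mathlib

open MeasureTheory Real

/-- Pointwise Gibbs inequality: for `y ≥ 0`, `c > 0`,
`y log c + y - c ≤ y log y`. -/
lemma gibbs_pointwise {y c : ℝ} (hy : 0 ≤ y) (hc : 0 < c) :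
    y * Real.log c + y - c ≤ y * Real.log y := by
  rcases hy.eq_or_lt with h | h
  · rw [← h]; simp; nlinarith
  · have h1 : Real.log (c / y) ≤ c / y - 1 := Real.log_le_sub_one_of_pos (by positivity)
    rw [Real.log_div hc.ne' h.ne'] at h1
    have h2 : y * (Real.log c - Real.log y) ≤ y * (c / y - 1) :=
      mul_le_mul_of_nonneg_left h1 hy
    have h3 : y * (c / y - 1) = c - y := by field_simp
    nlinarith

/-- Elementary inequality: `exp u * (1 - u) ≤ 1`. -/
lemma exp_mul_one_sub_le_one (u : ℝ) : Real.exp u * (1 - u) ≤ 1 := by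
  have h := Real.add_one_le_exp (-u)
  have h2 := Real.exp_pos u
  have h3 : Real.exp (-u) * Real.exp u = 1 := by
    rw [← Real.exp_add]; simp
  nlinarith

/-- **Key intermediate inequality in the proof of Shannon's inequality on ℝⁿ.** For a
probability density `f` with integrable entropy integrand and finite second moment
`θ² = ∫ |x-ω|² f(x) dx` about a point `ω`, for every `t > 0` one has
`exp(-(1/n) ∫ f log f) ≤ √(πe/t) (t + θ²/(2n))`. -/
theorem evi_intermediate_inequality_Rn (n : ℕ) (hn : 1 ≤ n)
    (f : EuclideanSpace ℝ (Fin n) → ℝ)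
    (hf_meas : Measurable f) (hf_nonneg : ∀ x, 0 ≤ f x)
    (hf_int : Integrable f) (hf_one : ∫ x, f x = 1)
    (hlog : Integrable (fun x => f x * Real.log (f x)))
    (ω : EuclideanSpace ℝ (Fin n))
    (hθ : Integrable (fun x => ‖x - ω‖ ^ 2 * f x))
    (t : ℝ) (ht : 0 < t) :
    Real.exp (-(1 / n : ℝ) * ∫ x, f x * Real.log (f x)) ≤
      Real.sqrt (π * Real.exp 1 / t) *
        (t + (∫ x, ‖x - ω‖ ^ 2 * f x) / (2 * n)) := by
  have hn0 : (0 : ℝ) < n := by exact_mod_cast hn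
  set θ2 : ℝ := ∫ x, ‖x - ω‖ ^ 2 * f x with hθ2
  have hθ2_nonneg : 0 ≤ θ2 :=
    integral_nonneg fun x => mul_nonneg (by positivity) (hf_nonneg x)
  set a : ℝ := θ2 / (2 * n) with ha
  have ha_nonneg : 0 ≤ a := by positivity
  set s : ℝ := t + a with hs
  have hs_pos : 0 < s := by positivity
  set b : ℝ := 1 / (2 * s) with hb
  have hb_pos : 0 < b := by positivity
  -- the (unnormalized) Gaussian
  set g : EuclideanSpace ℝ (Fin n) → ℝ := fun x => Real.exp (-b * ‖x - ω‖ ^ 2) with hg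
  have hg_pos : ∀ x, 0 < g x := fun x => Real.exp_pos _
  -- integrability & integral of the Gaussian
  have hg0_int : Integrable (fun x : EuclideanSpace ℝ (Fin n) =>
      Real.exp (-b * ‖x‖ ^ 2)) := by
    have := (GaussianFourier.integrable_cexp_neg_mul_sq_norm_add (V := EuclideanSpace ℝ (Fin n))
      (b := (b : ℂ)) (by simpa using hb_pos) 0 0).norm
    refine this.congr (ae_of_all _ fun x => ?_)
    simp only [Complex.norm_exp]
    push_cast
    simp [← Complex.ofReal_pow]
  have hg_int : Integrable g := by
    have hmp := measurePreserving_sub_right (volume : Measure (EuclideanSpace ℝ (Fin n))) ω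
    have := (hmp.integrable_comp
      (g := fun x : EuclideanSpace ℝ (Fin n) => Real.exp (-b * ‖x‖ ^ 2))
      (by exact (Real.continuous_exp.comp (by fun_prop)).aestronglyMeasurable)).mpr hg0_int
    exact this
  set C : ℝ := (π / b) ^ ((n : ℝ) / 2) with hC
  have hπb_pos : 0 < π / b := by positivity
  have hC_pos : 0 < C := Real.rpow_pos_of_pos hπb_pos _
  have hg_val : ∫ x, g x = C := by
    rw [hg]
    have h1 : ∫ x : EuclideanSpace ℝ (Fin n), Real.exp (-b * ‖x - ω‖ ^ 2)
        = ∫ x : EuclideanSpace ℝ (Fin n), Real.exp (-b * ‖x‖ ^ 2) :=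
      integral_sub_right_eq_self (fun x => Real.exp (-b * ‖x‖ ^ 2)) ω
    rw [h1, GaussianFourier.integral_rexp_neg_mul_sq_norm hb_pos]
    simp [hC]
  -- integrability of f * log (g/C)
  have hflog_int : Integrable (fun x => f x * (-b * ‖x - ω‖ ^ 2 - Real.log C)) := by
    have : (fun x : EuclideanSpace ℝ (Fin n) =>
        f x * (-b * ‖x - ω‖ ^ 2 - Real.log C))
        = fun x => (-b) * (‖x - ω‖ ^ 2 * f x) + (-Real.log C) * f x := by
      funext x; ring
    rw [this]
    exact (hθ.const_mul _).add (hf_int.const_mul _)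
  have hflog_val : ∫ x, f x * (-b * ‖x - ω‖ ^ 2 - Real.log C)
      = -b * θ2 - Real.log C := by
    have : (fun x : EuclideanSpace ℝ (Fin n) =>
        f x * (-b * ‖x - ω‖ ^ 2 - Real.log C))
        = fun x => (-b) * (‖x - ω‖ ^ 2 * f x) + (-Real.log C) * f x := by
      funext x; ring
    rw [this, integral_add (hθ.const_mul _) (hf_int.const_mul _),
      integral_const_mul, integral_const_mul, hf_one, ← hθ2]
    ring
  -- Gibbs: ∫ f log f ≥ -b θ² - log C
  have key : -b * θ2 - Real.log C ≤ ∫ x, f x * Real.log (f x) := by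
    have hint1 : Integrable (fun x => f x * (-b * ‖x - ω‖ ^ 2 - Real.log C) + f x) :=
      hflog_int.add hf_int
    have hint2 : Integrable (fun x => g x / C) := hg_int.div_const C
    have hmono : ∫ x, (f x * (-b * ‖x - ω‖ ^ 2 - Real.log C) + f x - g x / C)
        ≤ ∫ x, f x * Real.log (f x) := by
      apply integral_mono (hint1.sub hint2) hlog
      intro x
      have := gibbs_pointwise (hf_nonneg x) (c := g x / C) (by positivity)
      have hloggC : Real.log (g x / C) = -b * ‖x - ω‖ ^ 2 - Real.log C := by
        rw [Real.log_div (hg_pos x).ne' hC_pos.ne', hg, Real.log_exp]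
      rw [hloggC] at this
      simpa using this
    rw [integral_sub hint1 hint2,
      integral_add hflog_int hf_int, integral_div, hg_val, hf_one, hflog_val] at hmono
    have : C / C = 1 := div_self hC_pos.ne'
    rw [this] at hmono
    linarith
  -- hence -(1/n) ∫ f log f ≤ a/s + (1/2) log (π/b)
  have hlogC : Real.log C = (n : ℝ) / 2 * Real.log (π / b) :=
    Real.log_rpow hπb_pos _
  have hbθ : b * θ2 = (n : ℝ) * (a / s) := by
    rw [hb, ha]; field_simp
  have step1 : -(1 / n : ℝ) * ∫ x, f x * Real.log (f x)
      ≤ a / s + 1 / 2 * Real.log (π / b) := by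
    have h1 : -(1 / n : ℝ) * ∫ x, f x * Real.log (f x)
        ≤ (1 / n : ℝ) * (b * θ2 + Real.log C) := by
      have hninv : (0 : ℝ) < 1 / n := by positivity
      nlinarith [key]
    calc -(1 / n : ℝ) * ∫ x, f x * Real.log (f x)
        ≤ (1 / n : ℝ) * (b * θ2 + Real.log C) := h1
      _ = a / s + 1 / 2 * Real.log (π / b) := by
          rw [hbθ, hlogC]; field_simp
  -- exponentiate
  have step2 : Real.exp (-(1 / n : ℝ) * ∫ x, f x * Real.log (f x))
      ≤ Real.exp (a / s) * Real.sqrt (π / b) := by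
    have := Real.exp_le_exp.mpr step1
    rw [Real.exp_add] at this
    have hsq : Real.exp (1 / 2 * Real.log (π / b)) = Real.sqrt (π / b) := by
      rw [Real.sqrt_eq_rpow, Real.rpow_def_of_pos hπb_pos]
      ring_nf
    rwa [hsq] at this
  -- final algebraic inequality: exp(a/s) √(2πs) ≤ √(πe/t) s
  refine step2.trans ?_
  have hπb : π / b = 2 * π * s := by rw [hb]; field_simp
  rw [hπb]
  have hL_nonneg : 0 ≤ Real.exp (a / s) * Real.sqrt (2 * π * s) := by positivity
  have hR_nonneg : 0 ≤ Real.sqrt (π * Real.exp 1 / t) * s := by positivity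
  refine le_of_pow_le_pow_left₀ (n := 2) two_ne_zero hR_nonneg ?_
  have h2πs : (0:ℝ) ≤ 2 * π * s := by positivity
  have hπet : (0:ℝ) ≤ π * Real.exp 1 / t := by positivity
  rw [mul_pow, mul_pow, Real.sq_sqrt h2πs, Real.sq_sqrt hπet]
  have hexp2 : Real.exp (a / s) ^ 2 = Real.exp (2 * a / s) := by
    rw [← Real.exp_nat_mul]; ring_nf
  rw [hexp2]
  -- key : exp(2a/s) = e * exp(u), u = (a - t)/s ; exp(u) * (2t/s) ≤ 1
  set u : ℝ := (a - t) / s with hu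
  have hus : 2 * a / s = u + 1 := by rw [hu, hs]; field_simp; ring
  have h1mu : 1 - u = 2 * t / s := by rw [hu, hs]; field_simp; ring
  have hkey : Real.exp u * (2 * t / s) ≤ 1 := by
    rw [← h1mu]; exact exp_mul_one_sub_le_one u
  have hkey2 : Real.exp u * (2 * t) ≤ s := by
    calc Real.exp u * (2 * t) = Real.exp u * (2 * t / s) * s := by field_simp
      _ ≤ 1 * s := mul_le_mul_of_nonneg_right hkey hs_pos.le
      _ = s := one_mul s
  rw [hus, Real.exp_add,
    show π * Real.exp 1 / t * s ^ 2 = π * Real.exp 1 * s ^ 2 / t from by ring,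
    le_div_iff₀ ht]
  calc Real.exp u * Real.exp 1 * (2 * π * s) * t
      = π * Real.exp 1 * s * (Real.exp u * (2 * t)) := by ring
    _ ≤ π * Real.exp 1 * s * s :=
        mul_le_mul_of_nonneg_left hkey2 (by positivity)
    _ = π * Real.exp 1 * s ^ 2 := by ring
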